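/- Fix ℏ > 0 and let ψ : ℝ → ℂ be a Schwartz function. Then for every q ∈ ℝ, the momentum marginal of the Wigner function recovers the position density: ∫_ℝ W_ψ(q, p) dp = |ψ(q)|². -/

import Mathlib

open MeasureTheory

/-- The Wigner function of `ψ : ℝ → ℂ` (with Planck constant `h`):
`W_ψ(q,p) = (1/(2π)) ∫ conj(ψ(q + h s/2)) ψ(q − h s/2) e^{i p s} ds`. -/
noncomputable def wigner (h : ℝ) (ψ : ℝ → ℂ) (q p : ℝ) : ℂ :=
  (1 / (2 * Real.pi) : ℂ) *
    ∫ s : ℝ, (starRingEnd ℂ) (ψ (q + h * s / 2)) * ψ (q - h * s / 2) *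
      Complex.exp (Complex.I * (p : ℂ) * (s : ℂ))

open FourierTransform SchwartzMap Complex RealInnerProductSpace

lemma tg_affine (a b : ℝ) : Function.HasTemperateGrowth (fun s : ℝ => a + b * s) := by
  apply Function.HasTemperateGrowth.of_fderiv (k := 1) (C := |a| + |b|)
  · have : (fderiv ℝ fun s : ℝ => a + b * s) =
        fun _ : ℝ => ContinuousLinearMap.smulRight (1 : ℝ →L[ℝ] ℝ) b := by
      ext1 s
      simpa [ContinuousLinearMap.smulRight_one_eq_toSpanSingleton] using (((hasDerivAt_id s).const_mul b).const_add a).hasFDerivAt.fderiv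
    rw [this]
    exact .const _
  · exact (differentiable_id.const_mul b).const_add a
  · intro x
    have : |a + b * x| ≤ |a| + |b| * |x| := (abs_add_le _ _).trans (by rw [abs_mul])
    calc ‖a + b * x‖ = |a + b * x| := rfl
      _ ≤ |a| + |b| * |x| := this
      _ ≤ (|a| + |b|) * (1 + ‖x‖) ^ 1 := by
          have h1 : (0:ℝ) ≤ |a| := abs_nonneg a
          have h2 : (0:ℝ) ≤ |b| := abs_nonneg b
          have h3 : (0:ℝ) ≤ |x| := abs_nonneg x
          simp only [pow_one, Real.norm_eq_abs]
          nlinarith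

lemma upper_affine (a b : ℝ) (hb : b ≠ 0) :
    ∃ (k : ℕ) (C : ℝ), ∀ x : ℝ, ‖x‖ ≤ C * (1 + ‖(fun s : ℝ => a + b * s) x‖) ^ k := by
  refine ⟨1, (|a| + 1) / |b|, fun x => ?_⟩
  have hb' : (0:ℝ) < |b| := abs_pos.2 hb
  have key : |b| * |x| ≤ |a| + |a + b * x| := by
    have h4 : |b * x| ≤ |a + b * x| + |a| := by
      calc |b * x| = |(a + b * x) + (-a)| := by ring_nf
        _ ≤ |a + b * x| + |-a| := abs_add_le _ _
        _ = |a + b * x| + |a| := by rw [abs_neg]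
    rw [← abs_mul]
    linarith
  have h1 : (0:ℝ) ≤ |a| := abs_nonneg a
  have h3 : (0:ℝ) ≤ |a + b * x| := abs_nonneg _
  simp only [Real.norm_eq_abs, pow_one]
  rw [div_mul_eq_mul_div, le_div_iff₀ hb']
  nlinarith

/-- Conjugation of a Schwartz function is Schwartz. -/
noncomputable def conjSchwartz (f : SchwartzMap ℝ ℂ) : SchwartzMap ℝ ℂ where
  toFun := fun x => (starRingEnd ℂ) (f x)
  smooth' := Complex.conjCLE.toContinuousLinearMap.contDiff.comp f.smooth'
  decay' := by
    intro k n
    obtain ⟨C, hC⟩ := f.decay' k n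
    refine ⟨C, fun x => ?_⟩
    have : (fun x => (starRingEnd ℂ) (f x)) = Complex.conjLIE ∘ f := rfl
    rw [this, LinearIsometryEquiv.norm_iteratedFDeriv_comp_left]
    exact hC x

lemma schwartz_tg (f : SchwartzMap ℝ ℂ) : Function.HasTemperateGrowth (⇑f) := by
  refine ⟨f.smooth', fun n => ?_⟩
  obtain ⟨C, hC⟩ := f.decay' 0 n
  exact ⟨0, C, fun x => by
    have h := hC x; simp only [pow_zero, one_mul] at h; simp only [pow_zero, mul_one]; exact h⟩

/-- For `ℏ > 0` and a Schwartz function `ψ`, the momentum marginal of the Wigner function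
recovers the position density: `∫ W_ψ(q, p) dp = |ψ(q)|²` for every `q`. -/
theorem stmt_14 (ℏ : ℝ) (hℏ : 0 < ℏ) (ψ : SchwartzMap ℝ ℂ) (q : ℝ) :
    ∫ p : ℝ, wigner ℏ ψ q p = ((‖ψ q‖ ^ 2 : ℝ) : ℂ) := by
  have hb : (ℏ / 2 : ℝ) ≠ 0 := by positivity
  -- The two affine compositions
  set f₁ : SchwartzMap ℝ ℂ :=
    SchwartzMap.compCLM ℝ (tg_affine q (ℏ/2)) (upper_affine q (ℏ/2) hb) ψ with hf₁
  set f₂ : SchwartzMap ℝ ℂ :=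
    SchwartzMap.compCLM ℝ (tg_affine q (-(ℏ/2))) (upper_affine q (-(ℏ/2)) (neg_ne_zero.2 hb)) ψ
    with hf₂
  -- The product G s = conj(ψ(q + ℏs/2)) * ψ(q - ℏs/2)
  set G : SchwartzMap ℝ ℂ :=
    SchwartzMap.bilinLeftCLM (ContinuousLinearMap.mul ℝ ℂ) (schwartz_tg f₂) (conjSchwartz f₁)
    with hG
  have hGval : ∀ s : ℝ, G s =
      (starRingEnd ℂ) (ψ (q + ℏ * s / 2)) * ψ (q - ℏ * s / 2) := by
    intro s
    have e1 : q + ℏ/2 * s = q + ℏ * s / 2 := by ring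
    have e2 : q + -(ℏ/2) * s = q - ℏ * s / 2 := by ring
    simp only [hG, SchwartzMap.bilinLeftCLM, SchwartzMap.mkCLM, SchwartzMap.mkLM]
    show (ContinuousLinearMap.mul ℝ ℂ) ((conjSchwartz f₁) s) (f₂ s) = _
    simp only [ContinuousLinearMap.mul_apply']
    congr 1
    · show (starRingEnd ℂ) (f₁ s) = _
      rw [hf₁, SchwartzMap.compCLM_apply]
      simp only [Function.comp_apply, e1]
    · rw [hf₂, SchwartzMap.compCLM_apply]
      simp only [Function.comp_apply, e2]
  -- The inner integral is the Fourier transform of G at -p/(2π)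
  have hinner : ∀ p : ℝ, wigner ℏ ψ q p =
      (1 / (2 * Real.pi) : ℂ) * 𝓕 (⇑G) (-p / (2 * Real.pi)) := by
    intro p
    rw [wigner]
    congr 1
    rw [Real.fourier_eq']
    congr 1
    ext s
    rw [← hGval s, smul_eq_mul, mul_comm (Complex.exp _)]
    congr 1
    have hip : (inner ℝ s (-p / (2 * Real.pi)) : ℝ) = s * (-p / (2 * Real.pi)) := by simp [RCLike.inner_apply']; ring
    rw [hip]
    have harg : (-2 * Real.pi * (s * (-p / (2 * Real.pi)))) = p * s := by
      field_simp
    rw [harg]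
    congr 1
    push_cast
    ring
  rw [show (fun p : ℝ => wigner ℏ ψ q p) =
      fun p : ℝ => (1 / (2 * Real.pi) : ℂ) * 𝓕 (⇑G) (-p / (2 * Real.pi)) from funext hinner]
  rw [integral_const_mul]
  have hchg : (∫ p : ℝ, 𝓕 (⇑G) (-p / (2 * Real.pi)))
      = |(-(2 * Real.pi)⁻¹)⁻¹| • ∫ ξ : ℝ, 𝓕 (⇑G) ξ := by
    rw [← MeasureTheory.Measure.integral_comp_mul_left (𝓕 (⇑G)) (-(2 * Real.pi)⁻¹)]
    congr 1
    ext p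
    congr 1
    field_simp
  rw [hchg]
  have habs : |(-(2 * Real.pi)⁻¹)⁻¹| = 2 * Real.pi := by
    rw [abs_inv, abs_neg, abs_inv, inv_inv, abs_of_pos (by positivity : (0:ℝ) < 2 * Real.pi)]
  rw [habs]
  have hint : (∫ ξ : ℝ, 𝓕 (⇑G) ξ) = G 0 := by
    have hG0 : 𝓕⁻ (𝓕 (⇑G)) 0 = G 0 := by
      have := G.continuous.fourierInv_fourier_eq G.integrable
        (by exact (𝓕 G).integrable)
      exact congrFun this 0
    rw [← hG0, Real.fourierInv_eq]
    congr 1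
    ext v
    have : (inner ℝ v (0:ℝ) : ℝ) = 0 := inner_zero_right v
    rw [this]
    simp
  rw [hint]
  have : G 0 = (starRingEnd ℂ) (ψ q) * ψ q := by
    rw [hGval 0]; norm_num
  rw [Complex.real_smul, this, mul_comm ((starRingEnd ℂ) (ψ q)), Complex.mul_conj,
    Complex.normSq_eq_norm_sq]
  have hπ : (Real.pi : ℂ) ≠ 0 := Complex.ofReal_ne_zero.2 Real.pi_ne_zero
  push_cast
  field_simp
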